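/- Let u : ℝ → ℝ be three times continuously differentiable (ContDiff ℝ 3), let t ∈ ℝ and α > 0. For h > 0 define the generalized leapfrog predictor p h = u t + (1 + α) * h * (deriv u t) - α^2 * (u t - u (t - h/α)). Then (fun h => (p h - u (t + h)) / h^3) tends to -(1 + 1/α) * (iteratedDeriv 3 u t) / 6 as h → 0 within (0, ∞). Equivalently, in the paper's notation with Δtₙ = h and Δtₙ₋₁ = h/α, the predictor local error satisfies u^p_{n+1} − u(t_{n+1}) ≈ −(1 + Δtₙ₋₁/Δtₙ)·(Δtₙ³/6)·u⁽³⁾. -/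

import Mathlib

open Filter Set

/-- Leading-order local error of the generalized leapfrog predictor:
`(p h - u (t+h)) / h³ → -(1 + 1/α) · u⁽³⁾(t) / 6` as `h → 0⁺`. -/
theorem leapfrog_local_error_asymptotics (u : ℝ → ℝ) (hu : ContDiff ℝ 3 u)
    (t α : ℝ) (hα : 0 < α) :
    Filter.Tendsto
      (fun h : ℝ =>
        ((u t + (1 + α) * h * (deriv u t) - α ^ 2 * (u t - u (t - h / α)))
          - u (t + h)) / h ^ 3)
      (nhdsWithin 0 (Set.Ioi 0))
      (nhds (-(1 + 1 / α) * (iteratedDeriv 3 u t) / 6)) := by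
  have hα' : α ≠ 0 := ne_of_gt hα
  set u1 := deriv u with hu1def
  set u2 := deriv u1 with hu2def
  set u3 := deriv u2 with hu3def
  have hu1 : ContDiff ℝ 2 u1 := by
    have := hu.iterate_deriv' 2 1 (f := u)
    simpa using this
  have hu2 : ContDiff ℝ 1 u2 := by
    have := hu.iterate_deriv' 1 2 (f := u)
    simpa [Function.iterate_succ, hu2def, hu1def] using this
  have hiter : iteratedDeriv 3 u = u3 := by
    rw [iteratedDeriv_eq_iterate]
    rfl
  have hcont3 : Continuous u3 := by
    have := hu.continuous_iteratedDeriv 3 le_rfl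
    rwa [hiter] at this
  have du : Differentiable ℝ u := hu.differentiable (by norm_num)
  have du1 : Differentiable ℝ u1 := hu1.differentiable (by norm_num)
  have du2 : Differentiable ℝ u2 := hu2.differentiable one_ne_zero
  -- derivatives of the shifted compositions
  have hA : ∀ (v : ℝ → ℝ), Differentiable ℝ v → ∀ h : ℝ,
      HasDerivAt (fun h : ℝ => v (t + h)) (deriv v (t + h)) h := by
    intro v dv h
    have h1 : HasDerivAt (fun h : ℝ => t + h) 1 h := (hasDerivAt_id h).const_add t
    have h2 := (dv (t + h)).hasDerivAt
    simpa [Function.comp_def] using h2.comp h h1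
  have hB : ∀ (v : ℝ → ℝ), Differentiable ℝ v → ∀ h : ℝ,
      HasDerivAt (fun h : ℝ => v (t - h / α)) (-(1 / α) * deriv v (t - h / α)) h := by
    intro v dv h
    have h1 : HasDerivAt (fun h : ℝ => t - h / α) (-(1 / α)) h := by
      simpa [one_div] using ((hasDerivAt_id h).div_const α).const_sub t
    have h2 := (dv (t - h / α)).hasDerivAt
    have := h2.comp h h1
    simpa [mul_comm, Function.comp_def] using this
  set F : ℝ → ℝ := fun h =>
    (u t + (1 + α) * h * (u1 t) - α ^ 2 * (u t - u (t - h / α))) - u (t + h) with hF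
  set F1 : ℝ → ℝ := fun h => (1 + α) * u1 t - α * u1 (t - h / α) - u1 (t + h) with hF1
  set F2 : ℝ → ℝ := fun h => u2 (t - h / α) - u2 (t + h) with hF2
  set F3 : ℝ → ℝ := fun h => -(1 / α) * u3 (t - h / α) - u3 (t + h) with hF3
  have hdF : ∀ h : ℝ, HasDerivAt F (F1 h) h := by
    intro h
    have h1 := hB u du h
    have h2 := hA u du h
    have hlin : HasDerivAt (fun h : ℝ => (1 + α) * h * u1 t) ((1 + α) * u1 t) h := by
      simpa using ((hasDerivAt_id h).const_mul (1 + α)).mul_const (u1 t)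
    have := (((hasDerivAt_const h (u t)).add hlin).sub
      (((hasDerivAt_const h (u t)).sub h1).const_mul (α ^ 2))).sub h2
    refine this.congr_deriv ?_
    symm
    simp only [hF1, ← hu1def]
    generalize u1 (t - h / α) = x
    field_simp
    ring
  have hdF1 : ∀ h : ℝ, HasDerivAt F1 (F2 h) h := by
    intro h
    have h1 := hB u1 du1 h
    have h2 := hA u1 du1 h
    have := ((hasDerivAt_const h ((1 + α) * u1 t)).sub (h1.const_mul α)).sub h2
    refine this.congr_deriv ?_
    symm
    simp only [hF2, ← hu2def]
    generalize u2 (t - h / α) = x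
    field_simp
    ring
  have hdF2 : ∀ h : ℝ, HasDerivAt F2 (F3 h) h := by
    intro h
    have h1 := hB u2 du2 h
    have h2 := hA u2 du2 h
    have := h1.sub h2
    refine this.congr_deriv ?_
    simp [hF3, ← hu3def]
  have hcF : Continuous F := by
    fun_prop (disch := assumption)
  have hcF1 : Continuous F1 := by
    have : Continuous u1 := du1.continuous
    fun_prop (disch := assumption)
  have hcF2 : Continuous F2 := by
    have : Continuous u2 := du2.continuous
    fun_prop (disch := assumption)
  have hne : ∀ᶠ h : ℝ in nhdsWithin 0 (Set.Ioi 0), (0:ℝ) < h :=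
    eventually_mem_nhdsWithin
  -- final limit: F3 h / 6 → target
  have hlim3 : Tendsto (fun h : ℝ => F3 h / 6) (nhdsWithin 0 (Set.Ioi 0))
      (nhds (-(1 + 1 / α) * iteratedDeriv 3 u t / 6)) := by
    have hc : Continuous (fun h : ℝ => F3 h / 6) := by
      have : Continuous u3 := hcont3
      fun_prop (disch := assumption)
    have := (hc.tendsto 0).mono_left (nhdsWithin_le_nhds (s := Set.Ioi 0))
    convert this using 2
    simp only [hF3, hiter]
    simp only [zero_div, sub_zero, add_zero]
    field_simp
    ring
  -- third L'Hopital: F2 / (6h) → target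
  have hlim2 : Tendsto (fun h : ℝ => F2 h / (6 * h)) (nhdsWithin 0 (Set.Ioi 0))
      (nhds (-(1 + 1 / α) * iteratedDeriv 3 u t / 6)) := by
    apply HasDerivAt.lhopital_zero_nhdsGT (f' := F3) (g' := fun _ => (6:ℝ))
    · exact Eventually.of_forall hdF2
    · exact Eventually.of_forall fun h => by
        simpa using (hasDerivAt_id h).const_mul (6:ℝ)
    · exact Eventually.of_forall fun h => by norm_num
    · have := (hcF2.tendsto 0).mono_left (nhdsWithin_le_nhds (s := Set.Ioi 0))
      convert this using 2
      simp [hF2]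
    · have : Tendsto (fun h : ℝ => 6 * h) (nhds 0) (nhds 0) := by
        have : Continuous fun h : ℝ => 6 * h := by fun_prop
        simpa using this.tendsto (0:ℝ)
      exact this.mono_left (nhdsWithin_le_nhds (s := Set.Ioi 0))
    · exact hlim3
  -- second L'Hopital: F1 / (3h^2) → target
  have hlim1 : Tendsto (fun h : ℝ => F1 h / (3 * h ^ 2)) (nhdsWithin 0 (Set.Ioi 0))
      (nhds (-(1 + 1 / α) * iteratedDeriv 3 u t / 6)) := by
    apply HasDerivAt.lhopital_zero_nhdsGT (f' := F2) (g' := fun h => 6 * h)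
    · exact Eventually.of_forall hdF1
    · exact Eventually.of_forall fun h => by
        have := (hasDerivAt_pow 2 h).const_mul (3:ℝ)
        refine this.congr_deriv ?_
        push_cast
        ring
    · exact hne.mono fun h hh => by positivity
    · have := (hcF1.tendsto 0).mono_left (nhdsWithin_le_nhds (s := Set.Ioi 0))
      convert this using 2
      simp only [hF1]
      ring_nf
    · have : Tendsto (fun h : ℝ => 3 * h ^ 2) (nhds 0) (nhds 0) := by
        have : Continuous fun h : ℝ => 3 * h ^ 2 := by fun_prop
        simpa using this.tendsto (0:ℝ)
      exact this.mono_left (nhdsWithin_le_nhds (s := Set.Ioi 0))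
    · exact hlim2
  -- first L'Hopital: F / h^3 → target
  have hmain : Tendsto (fun h : ℝ => F h / h ^ 3) (nhdsWithin 0 (Set.Ioi 0))
      (nhds (-(1 + 1 / α) * iteratedDeriv 3 u t / 6)) := by
    apply HasDerivAt.lhopital_zero_nhdsGT (f' := F1) (g' := fun h => 3 * h ^ 2)
    · exact Eventually.of_forall hdF
    · exact Eventually.of_forall fun h => by
        simpa using hasDerivAt_pow 3 h
    · exact hne.mono fun h hh => by positivity
    · have := (hcF.tendsto 0).mono_left (nhdsWithin_le_nhds (s := Set.Ioi 0))
      convert this using 2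
      simp only [hF]
      norm_num
    · have : Tendsto (fun h : ℝ => h ^ 3) (nhds 0) (nhds 0) := by
        have : Continuous fun h : ℝ => h ^ 3 := by fun_prop
        simpa using this.tendsto (0:ℝ)
      exact this.mono_left (nhdsWithin_le_nhds (s := Set.Ioi 0))
    · exact hlim1
  exact hmain
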